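/- Let √D = [k; \overline{u,…,u,2k}] with k > u ≥ 5 and D squarefree, D ≡ 2 or 3 (mod 4). Let α_n = p_n + q_n√D be the convergent elements. Then for odd i < j ≤ (ℓ−4)/2, there is no integer h ≥ 0 such that α_i α_j − α_h² is totally positive. -/

import Mathlib

noncomputable def ufib (u : ℝ) : ℕ → ℝ
  | 0 => 0
  | 1 => 1
  | n+2 => u * ufib u (n+1) + ufib u n

lemma ufib_zero (u : ℝ) : ufib u 0 = 0 := rfl
lemma ufib_one (u : ℝ) : ufib u 1 = 1 := rfl
lemma ufib_rec (u : ℝ) (n : ℕ) : ufib u (n+2) = u * ufib u (n+1) + ufib u n := rfl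

lemma ufib_nonneg {u : ℝ} (hu : 1 ≤ u) : ∀ n, 0 ≤ ufib u n := by
  have h0 : (0:ℝ) ≤ u := by linarith
  intro n
  induction n using Nat.strong_induction_on with
  | _ n ih =>
    match n with
    | 0 => simp [ufib_zero]
    | 1 => simp [ufib_one]
    | n+2 =>
      rw [ufib_rec]
      have h1 := ih (n+1) (by omega)
      have h2 := ih n (by omega)
      positivity

lemma ufib_one_le {u : ℝ} (hu : 1 ≤ u) : ∀ n, 1 ≤ ufib u (n+1) := by
  intro n
  induction n using Nat.strong_induction_on with
  | _ n ih =>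
    match n with
    | 0 => simp [ufib_one]
    | n+1 =>
      rw [ufib_rec]
      have h1 := ih n (by omega)
      have h2 := ufib_nonneg hu n
      nlinarith

lemma ufib_le_succ {u : ℝ} (hu : 1 ≤ u) (n : ℕ) : ufib u n ≤ ufib u (n+1) := by
  match n with
  | 0 => simp [ufib_zero, ufib_one]
  | n+1 =>
    rw [ufib_rec]
    have h1 := ufib_one_le hu n
    have h2 := ufib_nonneg hu n
    nlinarith

lemma ufib_mono {u : ℝ} (hu : 1 ≤ u) : Monotone (ufib u) :=
  monotone_nat_of_le_succ (ufib_le_succ hu)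

lemma ufib_add (u : ℝ) : ∀ p q, ufib u (p+q+1) = ufib u (p+1) * ufib u (q+1) + ufib u p * ufib u q := by
  intro p
  induction p using Nat.strong_induction_on with
  | _ p ih =>
    match p with
    | 0 => intro q; simp [ufib_zero, ufib_one]
    | 1 =>
      intro q
      have e : 1 + q + 1 = q + 2 := by ring
      rw [e, ufib_rec]
      have e2 : ufib u (1+1) = u * 1 + 0 := rfl
      rw [e2, ufib_one]; ring
    | p+2 =>
      intro q
      have h1 := ih (p+1) (by omega) q
      have h2 := ih p (by omega) q
      have e1 : p+2+q+1 = (p+q+1) + 2 := by ring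
      have e2 : p+1+q+1 = (p+q+1) + 1 := by ring
      have e3 : p+2+1 = (p+1)+2 := rfl
      have e4 : p+2 = p+1+1 := rfl
      rw [e1, ufib_rec, ← e2, h1, h2, e3]
      simp only [ufib_rec]
      ring

lemma ufib_mul_le {u : ℝ} (hu : 1 ≤ u) (a b : ℕ) :
    ufib u (a+1) * ufib u (b+1) ≤ ufib u (a+b+1) := by
  rw [ufib_add]
  nlinarith [ufib_nonneg hu a, ufib_nonneg hu b]

lemma nat_le_ufib {u : ℝ} (hu : 5 ≤ u) : ∀ t : ℕ, (t:ℝ) ≤ ufib u (t+1) := by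
  have hu1 : (1:ℝ) ≤ u := by linarith
  intro t
  induction t with
  | zero => simp [ufib_one]
  | succ t ih =>
    rw [ufib_rec]
    have h1 := ufib_one_le hu1 t
    have h2 := ufib_nonneg hu1 t
    push_cast
    nlinarith

section SeqRec

variable {u δ : ℝ} {x : ℕ → ℝ} {N : ℕ}

lemma seq_id1 (hrec : ∀ n, n+2 ≤ N → x (n+2) = u * x (n+1) + x n)
    (hδ : δ = x 0 * x 2 - x 1 ^ 2) :
    ∀ r d, r + 1 + d ≤ N →
      x (r+1) * x (r+d) - x r * x (r+d+1) = (-1:ℝ)^(r+1) * δ * ufib u d := by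
  intro r
  induction r using Nat.strong_induction_on with
  | _ r ihr =>
    match r with
    | 0 =>
      intro d
      induction d using Nat.strong_induction_on with
      | _ d ihd =>
        match d with
        | 0 => intro _; simp only [zero_add, ufib_zero, mul_zero]; ring
        | 1 =>
          intro hN
          have h2 : x 2 = u * x 1 + x 0 := hrec 0 (by omega)
          simp only [zero_add, ufib_one, pow_one]
          norm_num [hδ, h2]; try ring
        | d+2 =>
          intro hN
          have h1 := ihd (d+1) (by omega) (by omega)
          have h2 := ihd d (by omega) (by omega)
          have e1 : x (d+2) = u * x (d+1) + x d := hrec d (by omega)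
          have e2 : x (d+3) = u * x (d+2) + x (d+1) := hrec (d+1) (by omega)
          simp only [zero_add] at h1 h2 ⊢
          rw [ufib_rec]
          have e3 : d+1+1 = d+2 := rfl
          have e4 : d+2+1 = d+3 := rfl
          rw [e3] at h1
          rw [e4, e2, e1]
          rw [e1] at h1
          linear_combination u * h1 + h2
    | r+1 =>
      intro d
      match d with
      | 0 => intro _; simp only [Nat.add_zero, ufib_zero, mul_zero]; ring
      | d+1 =>
        intro hN
        have hC := ihr r (by omega) (d+1) (by omega)
        have hA : x (r+2) = u * x (r+1) + x r := hrec r (by omega)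
        have hB : x (r+d+3) = u * x (r+d+2) + x (r+d+1) := hrec (r+d+1) (by omega)
        have e1 : r+1+1 = r+2 := rfl
        have e2 : r+1+(d+1) = r+d+2 := by omega
        have e3 : r+1+(d+1)+1 = r+d+3 := by omega
        have e4 : r+(d+1) = r+d+1 := by omega
        have e5 : r+(d+1)+1 = r+d+2 := by omega
        rw [e1, e3, e2, hA, hB]
        rw [e4, show r+d+1+1 = r+d+2 from rfl] at hC
        have epow : (-1:ℝ)^(r+1+1) = -(-1:ℝ)^(r+1) := by rw [pow_succ]; ring
        rw [epow]
        linear_combination -hC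

lemma seq_twostep (hrec : ∀ n, n+2 ≤ N → x (n+2) = u * x (n+1) + x n)
    (hδ : δ = x 0 * x 2 - x 1 ^ 2) (hδpos : 0 ≤ δ) (hu : 1 ≤ u)
    {i w : ℕ} (hi : Odd i) (hN : i + w + 4 ≤ N) :
    x i * x (i+w+4) ≤ x (i+2) * x (i+w+2) := by
  have h1 := seq_id1 hrec hδ (i+1) (w+1) (by omega)
  have h2 := seq_id1 hrec hδ i (w+3) (by omega)
  have e1 : i+1+1 = i+2 := rfl
  have e2 : i+1+(w+1) = i+w+2 := by omega
  have e3 : i+1+(w+1)+1 = i+w+3 := by omega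
  have e4 : i+(w+3) = i+w+3 := by omega
  have e5 : i+(w+3)+1 = i+w+4 := by omega
  rw [e1, e3, e2] at h1
  rw [e4, show i+w+3+1 = i+w+4 from rfl] at h2
  obtain ⟨c, hc⟩ := hi
  have epow1 : (-1:ℝ)^(i+1) = 1 := by
    rw [hc]; rw [show 2*c+1+1 = 2*(c+1) from by ring, pow_mul]; simp
  have epow2 : (-1:ℝ)^(i+1+1) = -1 := by
    rw [pow_succ, epow1]; ring
  rw [epow2] at h1
  rw [epow1] at h2
  have hmono : ufib u (w+1) ≤ ufib u (w+3) := ufib_mono hu (by omega)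
  have hp : 0 ≤ δ * (ufib u (w+3) - ufib u (w+1)) :=
    mul_nonneg hδpos (by linarith)
  nlinarith [h1, h2, hp]

lemma seq_keyI (hrec : ∀ n, n+2 ≤ N → x (n+2) = u * x (n+1) + x n)
    (hδ : δ = x 0 * x 2 - x 1 ^ 2) (hδpos : 0 < δ) (hu : 5 ≤ u) :
    ∀ t i, 1 ≤ t → Odd i → i + 2*t ≤ N → x i * x (i+2*t) < x (i+t) ^ 2 := by
  have hu1 : (1:ℝ) ≤ u := by linarith
  intro t
  induction t using Nat.strong_induction_on with
  | _ t iht =>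
    match t with
    | 0 => intro i h; exact absurd h (by omega)
    | 1 =>
      intro i _ hi hN
      have h1 := seq_id1 hrec hδ i 1 (by omega)
      have e1 : i+1+1 = i+2 := rfl
      have e2 : i + 2*1 = i+2 := by omega
      rw [e1] at h1
      rw [e2]
      obtain ⟨c, hc⟩ := hi
      have epow1 : (-1:ℝ)^(i+1) = 1 := by
        rw [hc, show 2*c+1+1 = 2*(c+1) from by ring, pow_mul]; simp
      rw [epow1, ufib_one] at h1
      nlinarith [h1, hδpos]
    | 2 =>
      intro i _ hi hN
      have h1 := seq_id1 hrec hδ (i+1) 1 (by omega)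
      have h2 := seq_id1 hrec hδ i 3 (by omega)
      have e1 : i+1+1 = i+2 := rfl
      have e2 : i+1+1+1 = i+3 := rfl
      have e3 : i+(3:ℕ) = i+3 := rfl
      have e4 : i+3+1 = i+4 := rfl
      have e5 : i + 2*2 = i + 4 := by omega
      have e6 : i+1+(1:ℕ) = i+2 := rfl
      rw [e6, e2] at h1
      rw [e3, e4] at h2
      rw [e5]
      obtain ⟨c, hc⟩ := hi
      have epow1 : (-1:ℝ)^(i+1) = 1 := by
        rw [hc, show 2*c+1+1 = 2*(c+1) from by ring, pow_mul]; simp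
      have epow2 : (-1:ℝ)^(i+1+1) = -1 := by rw [pow_succ, epow1]; ring
      rw [epow2, ufib_one] at h1
      rw [epow1] at h2
      -- ufib u 3 = u*u+1 ≥ 26
      have hf3 : ufib u 3 = u * ufib u 2 + ufib u 1 := rfl
      have hf2 : ufib u 2 = u * 1 + 0 := rfl
      have hf3' : ufib u 3 = u*u + 1 := by rw [hf3, hf2, ufib_one]; ring
      rw [hf3'] at h2
      have hq : (0:ℝ) < δ * (u*u) := mul_pos hδpos (by nlinarith)
      nlinarith [h1, h2, hq, pow_two (x (i+2))]
    | t+3 =>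
      intro i ht hi hN
      have hstep := seq_twostep hrec hδ (le_of_lt hδpos) hu1 hi (w := 2*t+2)
        (by omega)
      have hih := iht (t+1) (by omega) (i+2) (by omega) (by
          obtain ⟨c, hc⟩ := hi; exact ⟨c+1, by omega⟩) (by omega)
      have e1 : i+2 + 2*(t+1) = i + (2*t+2) + 2 := by omega
      have e2 : i + 2*(t+3) = i + (2*t+2) + 4 := by omega
      have e3 : i+2+(t+1) = i + (t+3) := by omega
      rw [e1, e3] at hih
      rw [e2]
      calc x i * x (i+(2*t+2)+4) ≤ x (i+2) * x (i+(2*t+2)+2) := hstep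
        _ < x (i+(t+3)) ^ 2 := hih

lemma seq_keyE (hrec : ∀ n, n+2 ≤ N → x (n+2) = u * x (n+1) + x n)
    (hδ : δ = x 0 * x 2 - x 1 ^ 2) (hu : 1 ≤ u) :
    ∀ t i, i + 2*t ≤ N →
      |x (i+t) ^ 2 - x i * x (i+2*t)| ≤ |δ| * t * ufib u (2*t+1) := by
  intro t
  induction t with
  | zero =>
    intro i _
    simp only [Nat.mul_zero, Nat.add_zero, Nat.cast_zero]
    rw [sq]; simp
  | succ t iht =>
    intro i hN
    have hih := iht (i+1) (by omega)
    have hJ := seq_id1 hrec hδ i (2*t+1) (by omega)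
    have e1 : i+1+(2*t) = i + 2*t+1 := by omega
    have e2 : i+1+t = i + t+1 := by omega
    have e3 : i+(2*t+1) = i+2*t+1 := by omega
    have e4 : i+(2*t+1)+1 = i+2*t+2 := by omega
    have e5 : i + 2*(t+1) = i + 2*t+2 := by omega
    have e6 : i + (t+1) = i + t + 1 := by omega
    rw [e1, e2] at hih
    rw [e4, e3] at hJ
    rw [e5, e6]
    have habs : |x (i+1) * x (i+2*t+1) - x i * x (i+2*t+2)| = |δ| * ufib u (2*t+1) := by
      rw [hJ, abs_mul, abs_mul]
      have : |(-1:ℝ)^(i+1)| = 1 := by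
        rw [abs_pow]; simp
      rw [this, one_mul, abs_of_nonneg (ufib_nonneg hu _)]
    have key : x (i+t+1)^2 - x i * x (i+2*t+2) =
        (x (i+t+1)^2 - x (i+1) * x (i+2*t+1)) +
        (x (i+1) * x (i+2*t+1) - x i * x (i+2*t+2)) := by ring
    rw [key]
    have hmono : ufib u (2*t+1) ≤ ufib u (2*(t+1)+1) := ufib_mono hu (by omega)
    calc |_ + _| ≤ |x (i+t+1)^2 - x (i+1) * x (i+2*t+1)| +
          |x (i+1) * x (i+2*t+1) - x i * x (i+2*t+2)| := abs_add_le _ _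
      _ ≤ |δ| * t * ufib u (2*t+1) + |δ| * ufib u (2*t+1) := by
          rw [habs]; exact add_le_add_left hih _
      _ = |δ| * ((t:ℝ)+1) * ufib u (2*t+1) := by ring
      _ ≤ |δ| * ((t:ℝ)+1) * ufib u (2*(t+1)+1) := by
          apply mul_le_mul_of_nonneg_left hmono (by positivity)
      _ = |δ| * ((t:ℕ)+1:ℕ) * ufib u (2*(t+1)+1) := by push_cast; ring
  
end SeqRec


set_option maxHeartbeats 4000000 in
/-- With `√D = [k; \overline{u,…,u,2k}]`, `k > u ≥ 5`, `D ≡ 2, 3 (mod 4)` squarefree,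
and `α_n = p_n + q_n √D` the convergent elements: for odd `i < j ≤ (ℓ-4)/2` there is
no `h ≥ 0` with `α_i α_j - α_h²` totally positive. -/
theorem stmt15 (D u k ℓ : ℕ) (hD : Squarefree D) (hD4 : D % 4 = 2 ∨ D % 4 = 3)
    (hu : 5 ≤ u) (hk : u < k)
    (hh : (GenContFract.of (Real.sqrt D)).h = (k : ℝ))
    (hcf : ∀ n : ℕ, (GenContFract.of (Real.sqrt D)).partDens.get? n =
      some (if n % (ℓ + 1) = ℓ then (2 * k : ℝ) else (u : ℝ)))
    (α α' : ℕ → ℝ)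
    (hα : ∀ n, α n = (GenContFract.of (Real.sqrt D)).nums n +
      (GenContFract.of (Real.sqrt D)).dens n * Real.sqrt D)
    (hα' : ∀ n, α' n = (GenContFract.of (Real.sqrt D)).nums n -
      (GenContFract.of (Real.sqrt D)).dens n * Real.sqrt D) :
    ∀ i j : ℕ, Odd i → Odd j → i < j → 2 * j + 4 ≤ ℓ →
      ∀ h : ℕ, ¬(0 < α i * α j - α h ^ 2 ∧ 0 < α' i * α' j - α' h ^ 2) := by
  intro i j hoi hoj hij hjl h
  -- notation
  set v : ℝ := Real.sqrt D with hv_def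
  set gcf := GenContFract.of v with hgcf_def
  set P : ℕ → ℝ := fun n => gcf.nums n with hP_def
  set Q : ℕ → ℝ := fun n => gcf.dens n with hQ_def
  set a : ℕ → ℝ := fun n => if n % (ℓ + 1) = ℓ then (2 * k : ℝ) else (u : ℝ) with ha_def
  obtain ⟨ci, hci⟩ := hoi
  obtain ⟨cj, hcj⟩ := hoj
  obtain ⟨t, htj, ht1⟩ : ∃ t, j = i + 2 * t ∧ 1 ≤ t := ⟨cj - ci, by omega, by omega⟩
  have hl10 : 10 ≤ ℓ := by omega
  have hjle : j ≤ ℓ := by omega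
  -- basic facts about D and v
  have hD2 : 2 ≤ D := by
    rcases hD4 with h4 | h4 <;> omega
  have hDnsq : ¬ IsSquare D := by
    rintro ⟨m, rfl⟩
    rcases Nat.even_or_odd m with ⟨c, hc⟩ | ⟨c, hc⟩
    · subst hc
      have : (c+c) * (c+c) % 4 = 0 := by
        have : (c+c) * (c+c) = 4 * (c*c) := by ring
        omega
      omega
    · subst hc
      have : (2*c+1) * (2*c+1) % 4 = 1 := by
        have : (2*c+1) * (2*c+1) = 4 * (c*c + c) + 1 := by ring
        omega
      omega
  have hirr : Irrational v := by
    rw [hv_def]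
    exact irrational_sqrt_natCast_iff.mpr hDnsq
  have hfloor : (⌊v⌋ : ℝ) = (k : ℝ) := by
    rw [← GenContFract.of_h_eq_floor, ← hgcf_def, hh]
  have hkv : (k:ℝ) < v := by
    have h1 : (⌊v⌋ : ℝ) ≤ v := Int.floor_le v
    have h2 : v ≠ (k:ℝ) := by
      intro hvk
      exact hirr ⟨(k:ℚ), by rw [hvk]; norm_num⟩
    cases' lt_or_eq_of_le (hfloor ▸ h1) with h h
    · exact h
    · exact absurd h.symm h2
  -- the sequence of partial denominators
  have hsq : ∀ n : ℕ, gcf.s.get? n = some ⟨1, a n⟩ := by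
    intro n
    obtain ⟨gp, hgp, hgpb⟩ := GenContFract.exists_s_b_of_partDen (hcf n)
    have hgpa : gp.a = 1 :=
      GenContFract.of_partNum_eq_one (GenContFract.partNum_eq_s_a hgp)
    have : gp = ⟨1, a n⟩ := by
      cases gp; simp_all
    rwa [this] at hgp
  have hterm : ∀ n, ¬ gcf.TerminatedAt n := by
    intro n hcon
    rw [GenContFract.terminatedAt_iff_s_none] at hcon
    rw [hsq n] at hcon
    exact Option.some_ne_none _ hcon
  have ha5 : ∀ n, (5:ℝ) ≤ a n := by
    intro n
    rw [ha_def]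
    simp only
    split
    · have h6 : (6:ℝ) ≤ (k:ℝ) := by exact_mod_cast (by omega : 6 ≤ k)
      linarith
    · exact_mod_cast hu
  have hau : ∀ n, n < ℓ → a n = (u:ℝ) := by
    intro n hn
    rw [ha_def]
    simp only
    rw [if_neg]
    have := Nat.mod_eq_of_lt (show n < ℓ+1 by omega)
    omega
  have ha0 : a 0 = (u:ℝ) := hau 0 (by omega)
  -- recurrences and initial values
  have hPrec : ∀ n, P (n+2) = a (n+1) * P (n+1) + P n := by
    intro n
    have := GenContFract.nums_recurrence (hsq (n+1)) (rfl : gcf.nums n = P n)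
      (rfl : gcf.nums (n+1) = P (n+1))
    simpa using this
  have hQrec : ∀ n, Q (n+2) = a (n+1) * Q (n+1) + Q n := by
    intro n
    have := GenContFract.dens_recurrence (hsq (n+1)) (rfl : gcf.dens n = Q n)
      (rfl : gcf.dens (n+1) = Q (n+1))
    simpa using this
  have hP0 : P 0 = (k:ℝ) := by
    show gcf.nums 0 = (k:ℝ)
    rw [GenContFract.zeroth_num_eq_h, hh]
  have hQ0 : Q 0 = 1 := GenContFract.zeroth_den_eq_one
  have hP1 : P 1 = (u:ℝ) * k + 1 := by
    show gcf.nums 1 = (u:ℝ) * k + 1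
    rw [GenContFract.first_num_eq (hsq 0), hh]
    simp [ha0]
  have hQ1 : Q 1 = (u:ℝ) := by
    show gcf.dens 1 = (u:ℝ)
    rw [GenContFract.first_den_eq (hsq 0), ha0]
  have hu5 : (5:ℝ) ≤ (u:ℝ) := by exact_mod_cast hu
  have hQpos : ∀ n, 0 < Q n := by
    intro n
    induction n using Nat.strong_induction_on with
    | _ n ih =>
      match n with
      | 0 => rw [hQ0]; norm_num
      | 1 => rw [hQ1]; linarith
      | n+2 =>
        rw [hQrec n]
        have h1 := ih (n+1) (by omega)
        have h2 := ih n (by omega)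
        nlinarith [ha5 (n+1)]
  have hQstep : ∀ n, 5 * Q n ≤ Q (n+1) := by
    intro n
    match n with
    | 0 => rw [hQ0, hQ1]; linarith
    | n+1 =>
      rw [hQrec n]
      nlinarith [ha5 (n+1), hQpos n, hQpos (n+1)]
  have hQmono : Monotone Q := by
    apply monotone_nat_of_le_succ
    intro n
    nlinarith [hQstep n, hQpos n]
  have hQgeo : ∀ n, (5:ℝ)^n ≤ Q n := by
    intro n
    induction n with
    | zero => rw [hQ0]; norm_num
    | succ n ih =>
      calc (5:ℝ)^(n+1) = 5 * 5^n := by ring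
        _ ≤ 5 * Q n := by linarith
        _ ≤ Q (n+1) := hQstep n
  -- P and Q take natural values
  have hPQnat : ∀ n, ∃ p q : ℕ, P n = p ∧ Q n = q := by
    intro n
    induction n using Nat.strong_induction_on with
    | _ n ih =>
      match n with
      | 0 => exact ⟨k, 1, hP0, by rw [hQ0]; norm_num⟩
      | 1 => exact ⟨u*k+1, u, by rw [hP1]; push_cast; ring, by rw [hQ1]⟩
      | n+2 =>
        obtain ⟨p1, q1, hp1, hq1⟩ := ih (n+1) (by omega)
        obtain ⟨p0, q0, hp0, hq0⟩ := ih n (by omega)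
        set An : ℕ := if (n+1) % (ℓ + 1) = ℓ then 2*k else u with hAn_def
        have haAn : a (n+1) = (An : ℝ) := by
          rw [ha_def, hAn_def]
          simp only
          split <;> push_cast <;> ring
        exact ⟨An * p1 + p0, An * q1 + q0,
          by rw [hPrec n, haAn, hp1, hp0]; push_cast; ring,
          by rw [hQrec n, haAn, hq1, hq0]; push_cast; ring⟩
  -- β = α' facts
  have hβval : ∀ n, α' n = P n - Q n * v := fun n => hα' n
  have hβrec : ∀ n, α' (n+2) = a (n+1) * α' (n+1) + α' n := by
    intro n
    rw [hβval, hβval, hβval, hPrec n, hQrec n]; ring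
  have hβne : ∀ n, α' n ≠ 0 := by
    intro n hc
    obtain ⟨p, q, hp, hq⟩ := hPQnat n
    rw [hβval, hp, hq] at hc
    have hq0 : 0 < (q:ℝ) := hq ▸ hQpos n
    have hq0' : (0:ℕ) < q := by exact_mod_cast hq0
    apply hirr
    refine ⟨(p:ℚ)/(q:ℚ), ?_⟩
    have : v = (p:ℝ)/(q:ℝ) := by
      field_simp at hc ⊢
      linarith [hc]
    rw [this]
    push_cast
    ring
  have hβub : ∀ n, |α' n| ≤ 1 / Q (n+1) := by
    intro n
    have h1 := GenContFract.abs_sub_convs_le (hterm n)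
    rw [GenContFract.conv_eq_num_div_den] at h1
    have hQn := hQpos n
    have hQn1 := hQpos (n+1)
    have e : α' n = Q n * (P n / Q n - v) := by
      rw [hβval]; field_simp
    rw [e, abs_mul, abs_of_pos hQn, abs_sub_comm]
    calc Q n * |v - P n / Q n| ≤ Q n * (1 / (Q n * Q (n+1))) := by
          apply mul_le_mul_of_nonneg_left h1 (le_of_lt hQn)
      _ = 1 / Q (n+1) := by field_simp
  -- no two consecutive α' have the same sign
  have hnss : ∀ n, α' n * α' (n+1) < 0 := by
    intro n
    by_contra hcon
    push_neg at hcon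
    obtain ⟨σ, hσ1, hσn, hσn1⟩ : ∃ σ : ℝ, (σ = 1 ∨ σ = -1) ∧
        0 < σ * α' n ∧ 0 < σ * α' (n+1) := by
      rcases lt_or_gt_of_ne (hβne n) with hneg | hpos
      · refine ⟨-1, Or.inr rfl, by nlinarith, ?_⟩
        rcases lt_or_gt_of_ne (hβne (n+1)) with h1 | h1
        · nlinarith
        · nlinarith
      · refine ⟨1, Or.inl rfl, by nlinarith, ?_⟩
        rcases lt_or_gt_of_ne (hβne (n+1)) with h1 | h1
        · nlinarith
        · nlinarith
    set c := min (σ * α' n) (σ * α' (n+1)) with hc_def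
    have hcpos : 0 < c := lt_min hσn hσn1
    have hmain : ∀ s, c ≤ σ * α' (n+s) ∧ c ≤ σ * α' (n+s+1) := by
      intro s
      induction s with
      | zero => exact ⟨min_le_left _ _, min_le_right _ _⟩
      | succ s ih =>
        obtain ⟨ih1, ih2⟩ := ih
        have e : n+(s+1)+1 = (n+s)+2 := by omega
        refine ⟨by rw [show n+(s+1) = n+s+1 from rfl]; exact ih2, ?_⟩
        rw [e, hβrec (n+s)]
        have := ha5 (n+s+1)
        nlinarith
    obtain ⟨M, hM⟩ := pow_unbounded_of_one_lt (1/c) (show (1:ℝ) < 5 by norm_num)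
    have h1 : c ≤ σ * α' (n+M) := (hmain M).1
    have h2 : |α' (n+M)| ≤ 1 / Q (n+M+1) := hβub (n+M)
    have h3 : (5:ℝ)^M ≤ Q (n+M+1) :=
      le_trans (pow_le_pow_right₀ (by norm_num) (by omega)) (hQgeo (n+M+1))
    have h4 : σ * α' (n+M) ≤ |α' (n+M)| := by
      rcases hσ1 with rfl | rfl
      · rw [one_mul]; exact le_abs_self _
      · rw [neg_one_mul]; exact neg_le_abs _
    have h5 : 1 / Q (n+M+1) ≤ 1 / 5^M :=
      one_div_le_one_div_of_le (by positivity) h3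
    have h7 : (1:ℝ)/5^M < c := by
      rw [div_lt_iff₀ hcpos] at hM
      rw [div_lt_iff₀ (by positivity : (0:ℝ) < (5:ℝ)^M)]
      nlinarith
    linarith
  -- strict sign alternation
  have hGsign : ∀ n, 0 < (-1:ℝ)^(n+1) * α' n := by
    intro n
    induction n with
    | zero =>
      have : α' 0 = (k:ℝ) - v := by rw [hβval, hP0, hQ0]; ring
      rw [this]
      norm_num
      nlinarith [hkv]
    | succ n ih =>
      have hw : ((-1:ℝ)^(n+1))^2 = 1 := by
        rw [← pow_mul, mul_comm, pow_mul]
        norm_num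
      by_contra hcon
      push_neg at hcon
      have h0 : 0 ≤ (-1:ℝ)^(n+1) * α' (n+1) := by
        have e : (-1:ℝ)^(n+1+1) = -((-1:ℝ)^(n+1)) := by rw [pow_succ]; ring
        rw [e] at hcon
        linarith
      have := mul_nonneg (le_of_lt ih) h0
      nlinarith [hnss n, hw]
  set G : ℕ → ℝ := fun n => (-1:ℝ)^(n+1) * α' n with hG_def
  have hGval : ∀ n, G n = (-1:ℝ)^(n+1) * α' n := fun n => rfl
  have hGpos : ∀ n, 0 < G n := hGsign
  have hGabs : ∀ n, |α' n| = G n := by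
    intro n
    have h1 : |G n| = G n := abs_of_pos (hGpos n)
    rw [hGval, abs_mul, abs_pow, abs_neg, abs_one, one_pow, one_mul] at h1
    exact h1
  have hGrec : ∀ n, G n = a (n+1) * G (n+1) + G (n+2) := by
    intro n
    rw [hGval, hGval, hGval]
    linear_combination ((-1:ℝ)^n) * hβrec n
  have hG5 : ∀ n, 5 * G (n+1) < G n := by
    intro n
    nlinarith [hGrec n, ha5 (n+1), hGpos (n+1), hGpos (n+2)]
  have hGanti : ∀ {m n : ℕ}, m ≤ n → G n ≤ G m := by
    have : StrictAnti G := strictAnti_nat_of_succ_lt (fun n => by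
      nlinarith [hG5 n, hGpos (n+1)])
    intro m n hmn; exact this.antitone hmn
  have hdet : ∀ n, P (n+1) * Q n - P n * Q (n+1) = (-1:ℝ)^n := by
    intro n
    induction n with
    | zero => rw [hP1, hP0, hQ1, hQ0]; ring
    | succ n ih =>
      rw [hPrec n, hQrec n]
      linear_combination (-1:ℝ) * ih
  have hQG : ∀ n, Q (n+1) * G n + Q n * G (n+1) = 1 := by
    intro n
    rw [hGval, hGval, hβval, hβval]
    have hpow : (-1:ℝ)^(2*n) = 1 := by rw [pow_mul]; norm_num
    linear_combination (-(-1:ℝ)^(n+1)) * hdet n + hpow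
  have hGub : ∀ n, G n ≤ 1 / Q (n+1) := by
    intro n
    rw [le_div_iff₀ (hQpos (n+1))]
    nlinarith [hQG n, mul_pos (hQpos n) (hGpos (n+1))]
  have hGlb : ∀ n, 1 / (2 * Q (n+1)) < G n := by
    intro n
    rw [div_lt_iff₀ (by nlinarith [hQpos (n+1)] : (0:ℝ) < 2 * Q (n+1))]
    have hq : Q n ≤ Q (n+1) := hQmono (Nat.le_succ n)
    have hg : G (n+1) < G n := by nlinarith [hG5 n, hGpos (n+1)]
    have hx : Q n * G (n+1) < Q (n+1) * G n := by
      nlinarith [hGpos (n+1), hGpos n, hQpos n, hQpos (n+1)]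
    nlinarith [hQG n]
  -- α facts
  have hαval : ∀ n, α n = P n + Q n * v := fun n => hα n
  have hαrec : ∀ n, α (n+2) = a (n+1) * α (n+1) + α n := by
    intro n; rw [hαval, hαval, hαval, hPrec n, hQrec n]; ring
  have hα0 : α 0 = (k:ℝ) + v := by rw [hαval, hP0, hQ0]; ring
  have hα1 : α 1 = (u:ℝ) * ((k:ℝ) + v) + 1 := by rw [hαval, hP1, hQ1]; ring
  have hk0 : (0:ℝ) ≤ (k:ℝ) := Nat.cast_nonneg k
  have hαpos : ∀ n, 0 < α n := by
    intro n
    induction n using Nat.strong_induction_on with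
    | _ n ih =>
      match n with
      | 0 => rw [hα0]; nlinarith [hkv]
      | 1 => rw [hα1]; nlinarith [hkv, hu5]
      | n+2 =>
        rw [hαrec n]
        nlinarith [ha5 (n+1), ih (n+1) (by omega), ih n (by omega)]
  have hαmono : StrictMono α := by
    apply strictMono_nat_of_lt_succ
    intro n
    match n with
    | 0 => rw [hα0, hα1]; nlinarith [hkv, hu5]
    | n+1 => rw [hαrec n]; nlinarith [ha5 (n+1), hαpos (n+1), hαpos n]
  -- recurrences with coefficient u inside the first period
  have hαu : ∀ n, n + 2 ≤ ℓ → α (n+2) = (u:ℝ) * α (n+1) + α n := by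
    intro n hn; rw [hαrec n, hau (n+1) (by omega)]
  have hβu : ∀ n, n + 2 ≤ ℓ → α' (n+2) = (u:ℝ) * α' (n+1) + α' n := by
    intro n hn; rw [hβrec n, hau (n+1) (by omega)]
  have hu1 : (1:ℝ) ≤ (u:ℝ) := by linarith
  -- δ for α is positive
  have hδapos : 0 < α 0 * α 2 - α 1 ^ 2 := by
    have h2 : α 2 = (u:ℝ) * α 1 + α 0 := hαu 0 (by omega)
    have hk6 : (u:ℝ) + 1 ≤ (k:ℝ) := by exact_mod_cast hk
    rw [h2, hα1, hα0]
    nlinarith [hkv, hu5]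
  -- Key inequality I
  have hkeyI : α i * α (i + 2*t) < α (i+t) ^ 2 :=
    seq_keyI hαu rfl hδapos hu5 t i ht1 ⟨ci, hci⟩ (by omega)
  -- Key estimate E
  have hkeyE : |α' (i+t) ^ 2 - α' i * α' (i + 2*t)| ≤
      |α' 0 * α' 2 - α' 1 ^ 2| * t * ufib (u:ℝ) (2*t+1) :=
    seq_keyE hβu rfl hu1 t i (by omega)
  -- chain for δ of β
  have hDchain : ∀ n, n + 2 ≤ ℓ →
      α' n * α' (n+2) - α' (n+1)^2 = (-1:ℝ)^n * (α' 0 * α' 2 - α' 1 ^ 2) := by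
    intro n
    induction n with
    | zero => intro _; norm_num
    | succ n ih =>
      intro hn
      have hE : α' (n+2) = (u:ℝ) * α' (n+1) + α' n := hβu n (by omega)
      have hE2 : α' (n+3) = (u:ℝ) * α' (n+2) + α' (n+1) := hβu (n+1) (by omega)
      have ihh := ih (by omega)
      rw [show n+1+2 = n+3 from rfl, show n+1+1 = n+2 from rfl, hE2]
      linear_combination (-1:ℝ) * ihh - α' (n+2) * hE
  obtain ⟨L, hL⟩ : ∃ L, ℓ = L + 2 := ⟨ℓ - 2, by omega⟩
  have hdb : |α' 0 * α' 2 - α' 1 ^ 2| ≤ 2 / (Q (L+1) * Q (L+2)) := by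
    have hch := hDchain L (by omega)
    have habs : |α' L * α' (L+2) - α' (L+1)^2| = |α' 0 * α' 2 - α' 1 ^ 2| := by
      rw [hch, abs_mul, abs_pow, abs_neg, abs_one, one_pow, one_mul]
    rw [← habs]
    have b1 := hβub L
    have b2 := hβub (L+1)
    have b3 := hβub (L+2)
    have q1 := hQpos (L+1)
    have q2 := hQpos (L+2)
    have q3 := hQpos (L+3)
    have hq12 : Q (L+1) ≤ Q (L+2) := hQmono (by omega)
    have hq23 : Q (L+2) ≤ Q (L+3) := hQmono (by omega)
    have e1 : |α' L * α' (L+2) - α' (L+1)^2| ≤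
        |α' L| * |α' (L+2)| + |α' (L+1)| * |α' (L+1)| := by
      calc |α' L * α' (L+2) - α' (L+1)^2| ≤ |α' L * α' (L+2)| + |α' (L+1)^2| :=
            abs_sub _ _
        _ = |α' L| * |α' (L+2)| + |α' (L+1)| * |α' (L+1)| := by
            rw [abs_mul, sq, abs_mul]
    have e2 : |α' L| * |α' (L+2)| ≤ (1/Q (L+1)) * (1/Q (L+3)) :=
      mul_le_mul b1 b3 (abs_nonneg _) (by positivity)
    have e3 : |α' (L+1)| * |α' (L+1)| ≤ (1/Q (L+2)) * (1/Q (L+2)) :=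
      mul_le_mul b2 b2 (abs_nonneg _) (by positivity)
    have e4 : (1/Q (L+1)) * (1/Q (L+3)) ≤ 1 / (Q (L+1) * Q (L+2)) := by
      rw [div_mul_div_comm, one_mul]
      apply one_div_le_one_div_of_le (by positivity)
      nlinarith
    have e5 : (1/Q (L+2)) * (1/Q (L+2)) ≤ 1 / (Q (L+1) * Q (L+2)) := by
      rw [div_mul_div_comm, one_mul]
      apply one_div_le_one_div_of_le (by positivity)
      nlinarith
    have e6 : 1/(Q (L+1) * Q (L+2)) + 1/(Q (L+1) * Q (L+2)) =
        2/(Q (L+1) * Q (L+2)) := by ring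
    linarith
  -- Fibonacci values of Q
  have hQF : ∀ n, n ≤ ℓ → Q n = ufib (u:ℝ) (n+1) := by
    intro n
    induction n using Nat.strong_induction_on with
    | _ n ih =>
      match n with
      | 0 => intro _; rw [hQ0, ufib_one]
      | 1 => intro _; rw [hQ1, ufib_rec, ufib_one, ufib_zero]; ring
      | n+2 =>
        intro hn
        rw [hQrec n, hau (n+1) (by omega), ih (n+1) (by omega) (by omega),
          ih n (by omega) (by omega), show n+2+1 = (n+1)+2 from rfl]
        simp only [ufib_rec]
  -- Fibonacci facts
  have hF0 : ∀ n, 0 ≤ ufib (u:ℝ) n := ufib_nonneg hu1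
  have hF1 : ∀ n, 1 ≤ ufib (u:ℝ) (n+1) := ufib_one_le hu1
  have hFm : ∀ {p q : ℕ}, p ≤ q → ufib (u:ℝ) p ≤ ufib (u:ℝ) q := by
    intro p q hpq; exact ufib_mono hu1 hpq
  -- the main Fibonacci estimate
  have hS : (t:ℝ) * ufib (u:ℝ) (2*t+1) * (ufib (u:ℝ) ((i+t)+2))^2 ≤
      3 * (ufib (u:ℝ) (L+2) * ufib (u:ℝ) (L+3)) := by
    set m := i + t with hm_def
    have s1 : (t:ℝ) ≤ ufib (u:ℝ) (t+1) := nat_le_ufib hu5 t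
    have s2 : ufib (u:ℝ) (t+1) * ufib (u:ℝ) (2*t+1) ≤ ufib (u:ℝ) (3*t+1) := by
      have := ufib_mul_le hu1 t (2*t)
      rwa [show t+2*t+1 = 3*t+1 by ring] at this
    have s3 : ufib (u:ℝ) (3*t+1) * ufib (u:ℝ) (m+2) ≤ ufib (u:ℝ) (3*t+m+2) := by
      have := ufib_mul_le hu1 (3*t) (m+1)
      rwa [show m+1+1 = m+2 by ring, show 3*t+(m+1)+1 = 3*t+m+2 by ring] at this
    have s4 : ufib (u:ℝ) (3*t+m+2) * ufib (u:ℝ) (m+2) ≤ ufib (u:ℝ) (3*t+2*m+3) := by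
      have := ufib_mul_le hu1 (3*t+m+1) (m+1)
      rwa [show 3*t+m+1+1 = 3*t+m+2 by ring, show m+1+1 = m+2 by ring,
           show 3*t+m+1+(m+1)+1 = 3*t+2*m+3 by ring] at this
    have s5 : ufib (u:ℝ) (3*t+2*m+3) ≤ ufib (u:ℝ) (2*L+4) := hFm (by omega)
    have s6 : ufib (u:ℝ) (2*L+4) ≤ 2 * (ufib (u:ℝ) (L+2) * ufib (u:ℝ) (L+3)) := by
      have hadd := ufib_add (u:ℝ) (L+1) (L+2)
      rw [show (L+1)+(L+2)+1 = 2*L+4 by ring, show L+1+1 = L+2 by ring,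
          show L+2+1 = L+3 by ring] at hadd
      have hm1 : ufib (u:ℝ) (L+1) * ufib (u:ℝ) (L+2) ≤
          ufib (u:ℝ) (L+3) * ufib (u:ℝ) (L+2) :=
        mul_le_mul_of_nonneg_right (hFm (by omega)) (hF0 (L+2))
      linarith only [hadd, hm1]
    have hA : (t:ℝ) * ufib (u:ℝ) (2*t+1) ≤ ufib (u:ℝ) (3*t+1) :=
      le_trans (mul_le_mul_of_nonneg_right s1 (hF0 (2*t+1))) s2
    have hB : (t:ℝ) * ufib (u:ℝ) (2*t+1) * ufib (u:ℝ) (m+2) ≤ ufib (u:ℝ) (3*t+m+2) :=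
      le_trans (mul_le_mul_of_nonneg_right hA (hF0 (m+2))) s3
    have hC : (t:ℝ) * ufib (u:ℝ) (2*t+1) * ufib (u:ℝ) (m+2) * ufib (u:ℝ) (m+2) ≤
        ufib (u:ℝ) (3*t+2*m+3) :=
      le_trans (mul_le_mul_of_nonneg_right hB (hF0 (m+2))) s4
    linarith only [hC, s5, s6, mul_nonneg (hF0 (L+2)) (hF0 (L+3))]
  -- squares of α' and G agree
  have hsqeq : ∀ n, α' n ^ 2 = G n ^ 2 := by
    intro n
    have hw : ((-1:ℝ)^(n+1))^2 = 1 := by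
      rw [← pow_mul, mul_comm, pow_mul]; norm_num
    rw [hGval n, mul_pow, hw, one_mul]
  -- final case analysis
  rintro ⟨hA, hB⟩
  rcases le_or_gt (i+t) h with hcase | hcase
  · -- h ≥ m : the first inequality fails
    have h1 : α (i+t) ≤ α h := hαmono.monotone hcase
    have h2 : 0 < α (i+t) := hαpos (i+t)
    have h3 : α (i+t)^2 ≤ α h^2 := pow_le_pow_left₀ (le_of_lt h2) h1 2
    rw [htj] at hA
    linarith only [hA, hkeyI, h3]
  · -- h < m : the second inequality fails
    have hg1 : G (i+t) ≤ G (h+1) := hGanti (by omega)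
    have hg2 : 5 * G (h+1) < G h := hG5 h
    have hGm5 : 5 * G (i+t) < G h := by linarith only [hg1, hg2]
    have e1 : (-1:ℝ)^(i+1) = 1 := by
      rw [hci, show 2*ci+1+1 = 2*(ci+1) from by ring, pow_mul]; norm_num
    have e2 : (-1:ℝ)^(j+1) = 1 := by
      rw [hcj, show 2*cj+1+1 = 2*(cj+1) from by ring, pow_mul]; norm_num
    have hbij : α' i * α' j = G i * G j := by
      rw [hGval i, hGval j, e1, e2]; ring
    -- bound for the error term
    have hQm : Q (i+t+1) = ufib (u:ℝ) ((i+t)+2) := by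
      rw [hQF (i+t+1) (by omega)]
    have hQl1 : Q (L+1) = ufib (u:ℝ) (L+2) := hQF (L+1) (by omega)
    have hQl2 : Q (L+2) = ufib (u:ℝ) (L+3) := hQF (L+2) (by omega)
    have hXpos : (0:ℝ) < ufib (u:ℝ) ((i+t)+2) := by
      have := hF1 ((i+t)+1); linarith
    have hFLpos : (0:ℝ) < ufib (u:ℝ) (L+2) * ufib (u:ℝ) (L+3) := by
      nlinarith [hF1 (L+1), hF1 (L+2)]
    have hRle : |α' 0 * α' 2 - α' 1 ^ 2| * t * ufib (u:ℝ) (2*t+1) ≤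
        6 / (ufib (u:ℝ) ((i+t)+2))^2 := by
      have h1 : |α' 0 * α' 2 - α' 1 ^ 2| ≤ 2/(ufib (u:ℝ) (L+2) * ufib (u:ℝ) (L+3)) := by
        rw [← hQl1, ← hQl2]; exact hdb
      have h2 : (0:ℝ) ≤ (t:ℝ) * ufib (u:ℝ) (2*t+1) :=
        mul_nonneg (Nat.cast_nonneg t) (hF0 _)
      have h3 : |α' 0 * α' 2 - α' 1 ^ 2| * t * ufib (u:ℝ) (2*t+1) ≤
          (2/(ufib (u:ℝ) (L+2) * ufib (u:ℝ) (L+3))) * ((t:ℝ) * ufib (u:ℝ) (2*t+1)) := by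
        rw [mul_assoc]
        exact mul_le_mul_of_nonneg_right h1 h2
      have h4 : (2/(ufib (u:ℝ) (L+2) * ufib (u:ℝ) (L+3))) * ((t:ℝ) * ufib (u:ℝ) (2*t+1)) ≤
          6/(ufib (u:ℝ) ((i+t)+2))^2 := by
        rw [div_mul_eq_mul_div, div_le_div_iff₀ hFLpos (pow_pos hXpos 2)]
        linarith only [hS]
      linarith
    have hGmlb : 6 / (ufib (u:ℝ) ((i+t)+2))^2 < 24 * G (i+t)^2 := by
      have hx : 1 < 2 * Q (i+t+1) * G (i+t) := by
        have hlb := hGlb (i+t)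
        rw [div_lt_iff₀ (by nlinarith [hQpos (i+t+1)])] at hlb
        linarith
      rw [hQm] at hx
      rw [div_lt_iff₀ (pow_pos hXpos 2)]
      have hx2 : 1 < (2 * ufib (u:ℝ) ((i+t)+2) * G (i+t)) ^ 2 := by
        have h1 : (1:ℝ) ≤ 1 := le_refl 1
        nlinarith [hx, mul_pos (mul_pos (show (0:ℝ) < 2 by norm_num) hXpos) (hGpos (i+t))]
      linarith only [hx2]
    have hkeyE' : α' i * α' j ≤ G (i+t)^2 +
        |α' 0 * α' 2 - α' 1 ^ 2| * t * ufib (u:ℝ) (2*t+1) := by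
      have hle := (abs_le.mp hkeyE).1
      rw [htj]
      linarith only [hle, hsqeq (i+t)]
    have h25 : 25 * G (i+t)^2 < G h^2 := by
      have hp : 0 ≤ 5 * G (i+t) := by linarith only [hGpos (i+t)]
      have := mul_self_lt_mul_self hp hGm5
      linarith only [this]
    have hfin : α' i * α' j < G h^2 := by
      linarith only [hkeyE', hRle, hGmlb, h25]
    linarith only [hB, hfin, hsqeq h]
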